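/- Let N be a natural number and let A ⊆ [0,1]^N be a Lebesgue measurable set of positive Lebesgue measure. For n ∈ ℤ^N let f_n ∈ L²(A) be given by f_n(t) = e^{2πi n·t} restricted to A, where n·t = n₁t₁ + ⋯ + n_N t_N. If ℤ^N can be partitioned into finitely many subsets A₁, …, A_L such that for each 1 ≤ l ≤ L the family (f_n)_{n ∈ A_l} is a Riesz basic sequence in L²(A), then ℤ^N can be partitioned into K syndetic subsets S₁, …, S_K with K ≤ L such that for each 1 ≤ k ≤ K the family (f_n)_{n ∈ S_k} is a Riesz basic sequence in L²(A). -/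

import Mathlib

open MeasureTheory
open scoped InnerProductSpace

/-- `(f i)_{i ∈ A}` is a Riesz basic sequence: there are `c, C > 0` with
`c Σ |aᵢ|² ≤ ‖Σ aᵢ fᵢ‖² ≤ C Σ |aᵢ|²` for every finitely supported family of
scalars supported in `A`. -/
def IsRieszBasicSequence {ι : Type*} {H : Type*} [NormedAddCommGroup H]
    [InnerProductSpace ℂ H] (f : ι → H) (A : Set ι) : Prop :=
  ∃ c > (0 : ℝ), ∃ C > (0 : ℝ), ∀ a : ι →₀ ℂ, (a.support : Set ι) ⊆ A →
    c * ∑ i ∈ a.support, ‖a i‖ ^ 2 ≤ ‖a.sum fun i c => c • f i‖ ^ 2 ∧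
    ‖a.sum fun i c => c • f i‖ ^ 2 ≤ C * ∑ i ∈ a.support, ‖a i‖ ^ 2

/-- `S` is a syndetic subset of the additive group `ℤ^N`. -/
def IsSyndeticAdd {N : ℕ} (S : Set (Fin N → ℤ)) : Prop :=
  ∃ F : Finset (Fin N → ℤ), ∀ g : Fin N → ℤ, ∃ f ∈ F, f + g ∈ S

open Filter

private lemma Lp_coeFn_finset_sum {α E : Type*} {m : MeasurableSpace α} [NormedAddCommGroup E]
    {p : ENNReal} {μ : Measure α} {ι : Type*} (s : Finset ι) (F : ι → Lp E p μ) :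
    ⇑(∑ i ∈ s, F i) =ᵐ[μ] fun x => ∑ i ∈ s, F i x := by
  classical
  induction s using Finset.induction with
  | empty => simp only [Finset.sum_empty]; exact Lp.coeFn_zero E p μ
  | @insert i s hi ih =>
    rw [Finset.sum_insert hi]
    filter_upwards [Lp.coeFn_add (F i) (∑ j ∈ s, F j), ih] with x h1 h2
    rw [h1, Pi.add_apply, h2, Finset.sum_insert hi]

private lemma eventuallyEq_finset_sum {α ι M : Type*} [AddCommMonoid M] {l : Filter α}
    {F G : ι → α → M} (s : Finset ι) (h : ∀ i ∈ s, F i =ᶠ[l] G i) :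
    (fun t => ∑ i ∈ s, F i t) =ᶠ[l] fun t => ∑ i ∈ s, G i t := by
  classical
  induction s using Finset.induction with
  | empty => simp
  | @insert i s hi ih =>
    filter_upwards [h i (Finset.mem_insert_self i s),
      ih fun j hj => h j (Finset.mem_insert_of_mem hj)] with t h1 h2
    simp [Finset.sum_insert hi, h1, h2]

/-- Minimal subshift refinement: from any coloring `χ` of `ℤ^N` by `Fin L`, produce a
coloring `y` whose nonempty color classes are syndetic and whose finite patterns all
occur (up to translation) in `χ`. -/
lemma exists_minimal_coloring {N L : ℕ} (χ : (Fin N → ℤ) → Fin L) :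
    ∃ y : (Fin N → ℤ) → Fin L,
      (∀ k : Fin L, (∃ g, y g = k) → IsSyndeticAdd {g | y g = k}) ∧
      (∀ F : Finset (Fin N → ℤ), ∃ g, ∀ x ∈ F, y x = χ (x + g)) := by
  classical
  set σ : (Fin N → ℤ) → ((Fin N → ℤ) → Fin L) → ((Fin N → ℤ) → Fin L) := fun g z x => z (x + g) with hσ
  have hσcont : ∀ g, Continuous (σ g) := fun g =>
    continuous_pi fun x => continuous_apply (x + g)
  have hσcomp : ∀ g h z, σ g (σ h z) = σ (g + h) z := by
    intro g h z; funext x; simp only [hσ]; ring_nf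
  set O : Set ((Fin N → ℤ) → Fin L) := Set.range (fun g => σ g χ) with hO
  set X : Set ((Fin N → ℤ) → Fin L) := closure O with hX
  have hOinv : ∀ g, σ g '' O ⊆ O := by
    rintro g _ ⟨_, ⟨h, rfl⟩, rfl⟩
    exact ⟨g + h, (hσcomp g h χ).symm⟩
  have hXinv : ∀ g z, z ∈ X → σ g z ∈ X := by
    intro g z hz
    have := image_closure_subset_closure_image (s := O) (hσcont g)
    exact closure_mono (hOinv g) (this ⟨z, hz, rfl⟩)
  set S₀ : Set (Set ((Fin N → ℤ) → Fin L)) :=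
    {Y | Y.Nonempty ∧ IsClosed Y ∧ Y ⊆ X ∧ ∀ g, ∀ z ∈ Y, σ g z ∈ Y} with hS₀
  have hXS : X ∈ S₀ := by
    refine ⟨⟨χ, subset_closure ⟨0, ?_⟩⟩, isClosed_closure, le_refl _, fun g z hz => hXinv g z hz⟩
    funext x; simp [hσ]
  have hchainlb : ∀ c ⊆ S₀, IsChain (· ⊆ ·) c → c.Nonempty → ∃ lb ∈ S₀, ∀ s ∈ c, lb ⊆ s := by
    intro c hcS hchain hcne
    refine ⟨⋂₀ c, ⟨?_, ?_, ?_, ?_⟩, fun s hs => Set.sInter_subset_of_mem hs⟩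
    · -- nonempty by compactness
      have : Nonempty c := hcne.to_subtype
      have := IsCompact.nonempty_iInter_of_directed_nonempty_isCompact_isClosed
        (fun s : c => (s : Set ((Fin N → ℤ) → Fin L)))
        (fun s t => ?_)
        (fun s => (hcS s.2).1)
        (fun s => (hcS s.2).2.1.isCompact)
        (fun s => (hcS s.2).2.1)
      · rwa [Set.sInter_eq_iInter]
      · rcases hchain.total s.2 t.2 with h | h
        · exact ⟨s, Set.Subset.rfl, h⟩
        · exact ⟨t, h, Set.Subset.rfl⟩
    · exact isClosed_sInter fun s hs => (hcS hs).2.1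
    · obtain ⟨s, hs⟩ := hcne
      exact (Set.sInter_subset_of_mem hs).trans (hcS hs).2.2.1
    · intro g z hz
      exact fun s hs => (hcS hs).2.2.2 g z (hz s hs)
  obtain ⟨m, -, hm⟩ := zorn_superset_nonempty S₀ hchainlb X hXS
  obtain ⟨⟨y, hy⟩, hmcl, hmX, hminv⟩ := hm.prop
  refine ⟨y, ?_, ?_⟩
  · -- syndetic color classes
    rintro k ⟨g₀, hg₀⟩
    set U : Set ((Fin N → ℤ) → Fin L) := {z | z 0 = k} with hU
    have hUopen : IsOpen U := by
      have : U = (fun z : (Fin N → ℤ) → Fin L => z 0) ⁻¹' {k} := rfl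
      rw [this]; exact (continuous_apply 0).isOpen_preimage _ (isOpen_discrete _)
    have hmW : m ⊆ ⋃ g, σ g ⁻¹' U := by
      by_contra hnot
      set Z : Set ((Fin N → ℤ) → Fin L) := m \ ⋃ g, σ g ⁻¹' U with hZ
      have hZne : Z.Nonempty := by
        rw [Set.not_subset] at hnot
        obtain ⟨z, hzm, hz⟩ := hnot
        exact ⟨z, hzm, hz⟩
      have hZS : Z ∈ S₀ := by
        refine ⟨hZne, ?_, fun z hz => hmX hz.1, ?_⟩
        · exact hmcl.sdiff (isOpen_iUnion fun g => (hσcont g).isOpen_preimage _ hUopen)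
        · rintro g z ⟨hzm, hzW⟩
          refine ⟨hminv g z hzm, ?_⟩
          intro hmem
          apply hzW
          simp only [Set.mem_iUnion, Set.mem_preimage] at hmem ⊢
          obtain ⟨h, hh⟩ := hmem
          exact ⟨h + g, by rwa [← hσcomp]⟩
      have : m ⊆ Z := hm.2 hZS (Set.diff_subset)
      have hyZ : y ∈ Z := this hy
      apply hyZ.2
      refine Set.mem_iUnion.mpr ⟨g₀, ?_⟩
      show σ g₀ y 0 = k
      simpa [hσ] using hg₀
    have hmcpt : IsCompact m := hmcl.isCompact
    obtain ⟨F, hF⟩ := hmcpt.elim_finite_subcover (fun g => σ g ⁻¹' U)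
      (fun g => (hσcont g).isOpen_preimage _ hUopen) hmW
    refine ⟨F, fun h => ?_⟩
    have : σ h y ∈ m := hminv h y hy
    obtain ⟨g, hgF, hg⟩ := by
      have := hF this
      simpa using this
    refine ⟨g, hgF, ?_⟩
    have : σ g (σ h y) 0 = k := hg
    rw [hσcomp] at this
    simpa [hσ] using this
  · -- patterns of y occur in χ
    intro F
    have hyX : y ∈ X := hmX hy
    set V : Set ((Fin N → ℤ) → Fin L) := ⋂ x ∈ F, (fun z : (Fin N → ℤ) → Fin L => z x) ⁻¹' {y x} with hV
    have hVopen : IsOpen V := isOpen_biInter_finset fun x _ =>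
      (continuous_apply x).isOpen_preimage _ (isOpen_discrete _)
    have hyV : y ∈ V := by simp [hV]
    obtain ⟨z, hzV, g, rfl⟩ := mem_closure_iff.mp hyX V hVopen hyV
    refine ⟨g, fun x hx => ?_⟩
    have h2 := Set.mem_iInter₂.mp hzV x hx
    simp only [Set.mem_preimage, Set.mem_singleton_iff, hσ] at h2
    exact h2.symm

theorem syndetic_riesz_partition_of_fourier_frame
    (N : ℕ) (A : Set (Fin N → ℝ))
    (hA : A ⊆ Set.Icc 0 1) (hAmeas : MeasurableSet A) (hApos : 0 < volume A)
    (f : (Fin N → ℤ) → Lp ℂ 2 (volume.restrict A))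
    (hf : ∀ n : Fin N → ℤ,
      (f n : (Fin N → ℝ) → ℂ) =ᵐ[volume.restrict A]
        fun t => Complex.exp (2 * Real.pi * Complex.I * ∑ j, (n j : ℂ) * (t j : ℂ)))
    (L : ℕ) (B : Fin L → Set (Fin N → ℤ))
    (hdisj : ∀ l l' : Fin L, l ≠ l' → Disjoint (B l) (B l'))
    (hcover : (⋃ l, B l) = Set.univ)
    (hriesz : ∀ l : Fin L, IsRieszBasicSequence f (B l)) :
    ∃ K : ℕ, K ≤ L ∧ ∃ S : Fin K → Set (Fin N → ℤ),
      (∀ k k' : Fin K, k ≠ k' → Disjoint (S k) (S k')) ∧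
      (⋃ k, S k) = Set.univ ∧
      ∀ k : Fin K, IsSyndeticAdd (S k) ∧ IsRieszBasicSequence f (S k) := by
  classical
  -- the coloring of `ℤ^N` induced by the partition
  have hcolor : ∀ g : Fin N → ℤ, ∃ l, g ∈ B l := by
    intro g
    have : g ∈ ⋃ l, B l := hcover ▸ Set.mem_univ g
    exact Set.mem_iUnion.mp this
  set χ : (Fin N → ℤ) → Fin L := fun g => (hcolor g).choose with hχ
  have hχmem : ∀ g, g ∈ B (χ g) := fun g => (hcolor g).choose_spec
  obtain ⟨y, hsynd, hpat⟩ := exists_minimal_coloring χ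
  -- translation invariance of the norms
  have hnorm : ∀ (a : (Fin N → ℤ) →₀ ℂ) (g : Fin N → ℤ),
      ‖a.sum fun n c => c • f (n + g)‖ = ‖a.sum fun n c => c • f n‖ := by
    intro a g
    classical
    set E : (Fin N → ℤ) → (Fin N → ℝ) → ℂ :=
      fun n t => Complex.exp (2 * Real.pi * Complex.I * ∑ j, (n j : ℂ) * (t j : ℂ)) with hE
    have hcoe : ∀ m : (Fin N → ℤ) → (Fin N → ℤ),
        ⇑(a.sum fun n c => c • f (m n)) =ᵐ[volume.restrict A] fun t => ∑ n ∈ a.support, a n * E (m n) t := by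
      intro m
      have h0 : (a.sum fun n c => c • f (m n)) = ∑ n ∈ a.support, a n • f (m n) := rfl
      rw [h0]
      refine (Lp_coeFn_finset_sum a.support fun n => a n • f (m n)).trans ?_
      refine eventuallyEq_finset_sum a.support fun n _ => ?_
      refine (Lp.coeFn_smul (a n) (f (m n))).trans ?_
      filter_upwards [hf (m n)] with t ht
      simp only [Pi.smul_apply, smul_eq_mul, hE]
      rw [ht]
    have hEnorm : ∀ (n : Fin N → ℤ) (t : Fin N → ℝ), ‖E n t‖ = 1 := by
      intro n t
      have hz : (∑ j, (n j : ℂ) * (t j : ℂ)) = ((∑ j, (n j : ℝ) * t j : ℝ) : ℂ) := by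
        push_cast; ring
      have h2 : (2 * Real.pi * Complex.I * ((∑ j, (n j : ℝ) * t j : ℝ) : ℂ))
          = ((2 * Real.pi * (∑ j, (n j : ℝ) * t j) : ℝ) : ℂ) * Complex.I := by
        push_cast; ring
      rw [hE]
      simp only
      rw [hz, h2, Complex.norm_exp_ofReal_mul_I]
    have hfact : ∀ (n : Fin N → ℤ) (t : Fin N → ℝ), E (n + g) t = E g t * E n t := by
      intro n t
      rw [hE]
      simp only
      rw [← Complex.exp_add]
      congr 1
      rw [← mul_add, ← Finset.sum_add_distrib]
      congr 1
      apply Finset.sum_congr rfl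
      intro j _
      simp only [Pi.add_apply]
      push_cast
      ring
    rw [Lp.norm_def, Lp.norm_def]
    congr 1
    have e1 := hcoe (fun n => n + g)
    have e2 := hcoe (fun n => n)
    rw [eLpNorm_congr_ae e1, eLpNorm_congr_ae e2]
    apply eLpNorm_congr_norm_ae
    refine Eventually.of_forall fun t => ?_
    calc ‖∑ n ∈ a.support, a n * E (n + g) t‖
        = ‖E g t * ∑ n ∈ a.support, a n * E n t‖ := by
          rw [Finset.mul_sum]
          congr 1
          refine Finset.sum_congr rfl fun n _ => ?_
          rw [hfact]; ring
      _ = ‖∑ n ∈ a.support, a n * E n t‖ := by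
          rw [norm_mul, hEnorm, one_mul]
  -- each nonempty color class of `y` is a Riesz basic sequence
  have hrieszS : ∀ k : Fin L, IsRieszBasicSequence f {g | y g = k} := by
    intro k
    obtain ⟨c, hc, C, hC, hBk⟩ := hriesz k
    refine ⟨c, hc, C, hC, ?_⟩
    intro a ha
    obtain ⟨g, hg⟩ := hpat a.support
    set b := Finsupp.equivMapDomain (Equiv.addRight g) a with hb
    have hb1 : (b.sum fun i c => c • f i) = a.sum fun n c => c • f (n + g) := by
      rw [hb, Finsupp.sum_equivMapDomain]
      simp only [Equiv.coe_addRight]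
    have hb2 : ∑ i ∈ b.support, ‖b i‖ ^ 2 = ∑ i ∈ a.support, ‖a i‖ ^ 2 :=
      Finsupp.sum_equivMapDomain (Equiv.addRight g) a fun _ c => ‖c‖ ^ 2
    have hbsupp : (b.support : Set (Fin N → ℤ)) ⊆ B k := by
      intro i hi
      have hib : b i ≠ 0 := Finsupp.mem_support_iff.mp hi
      rw [hb, Finsupp.equivMapDomain_apply] at hib
      have hx : (Equiv.addRight g).symm i ∈ a.support := Finsupp.mem_support_iff.mpr hib
      have hxy : y ((Equiv.addRight g).symm i) = k := ha hx
      have hxχ := hg _ hx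
      have hmem := hχmem ((Equiv.addRight g).symm i + g)
      rw [← hxχ, hxy] at hmem
      simpa using hmem
    have := hBk b hbsupp
    rw [hb1, hnorm a g, hb2] at this
    exact this
  set R : Finset (Fin L) := Finset.univ.filter (fun k => ∃ g, y g = k) with hR
  refine ⟨R.card, ?_, fun k => {g | y g = ((R.equivFin.symm k : R) : Fin L)}, ?_, ?_, ?_⟩
  · calc R.card ≤ Finset.univ.card := Finset.card_le_univ R
      _ = L := by simp
  · intro k k' hne
    rw [Set.disjoint_left]
    intro g h1 h2
    have : ((R.equivFin.symm k : R) : Fin L) = ((R.equivFin.symm k' : R) : Fin L) := by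
      rw [← h1, ← h2]
    exact hne (R.equivFin.symm.injective (Subtype.coe_injective this))
  · ext g
    simp only [Set.mem_iUnion, Set.mem_setOf_eq, Set.mem_univ, iff_true]
    have hyg : y g ∈ R := by simp [hR]
    refine ⟨R.equivFin ⟨y g, hyg⟩, ?_⟩
    rw [Equiv.symm_apply_apply]
  · intro k
    have hmem : ((R.equivFin.symm k : R) : Fin L) ∈ R := (R.equivFin.symm k).2
    have hmem' : ((R.equivFin.symm k : R) : Fin L) ∈
        Finset.filter (fun k => ∃ g, y g = k) Finset.univ := by rw [← hR]; exact hmem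
    have hex : ∃ g, y g = ((R.equivFin.symm k : R) : Fin L) :=
      (Finset.mem_filter.mp hmem').2
    exact ⟨hsynd _ hex, hrieszS _⟩
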